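/- Suppose the modular program signature is structurally valid and I is a valid selection. Then the neighbor set Nei(I) = { I' | I' a valid selection with |siblings(I, I')| = 1 } satisfies Nei(I) = ⋃_{i ∈ I} ⋃_{i' ∈ impls(par(i)) \ {i}} { I' | I' a valid selection of Limit((I \ {i}) ∪ {i'}) }. -/

import Mathlib

/-- `pars I` is the image of `par` on the finset `I` of implementations. -/
def pars {ι κ : Type*} [DecidableEq κ] (par : ι → κ) (I : Finset ι) : Finset κ :=
  I.image par

/-- `holesOf I` is the union of the holes referenced by the implementations in `I`. -/
def holesOf {ι κ : Type*} [DecidableEq ι] [DecidableEq κ]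
    (holes : ι → Finset κ) (I : Finset ι) : Finset κ :=
  I.biUnion holes

/-- `implsH h` is the finset of implementations of the hole `h`. -/
def implsH {ι κ : Type*} [Fintype ι] [DecidableEq κ] (par : ι → κ) (h : κ) : Finset ι :=
  Finset.univ.filter (fun i => par i = h)

/-- `implsHs H` is the finset of implementations of holes in `H`. -/
def implsHs {ι κ : Type*} [Fintype ι] [DecidableEq κ] (par : ι → κ) (H : Finset κ) : Finset ι :=
  Finset.univ.filter (fun i => par i ∈ H)

/-- `siblings I₁ I₂` is the finset of pairs of distinct implementations across `I₁`, `I₂`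
sharing a parent hole. -/
def siblings {ι κ : Type*} [DecidableEq ι] [DecidableEq κ]
    (par : ι → κ) (I₁ I₂ : Finset ι) : Finset (ι × ι) :=
  (I₁ ×ˢ I₂).filter (fun p => p.1 ≠ p.2 ∧ par p.1 = par p.2)

/-- A finset `I` of implementations is a valid selection. -/
def ValidSelection {ι κ : Type*} [DecidableEq ι] [DecidableEq κ]
    (par : ι → κ) (holes : ι → Finset κ) (baseHoles : Finset κ) (I : Finset ι) : Prop :=
  pars par I = baseHoles ∪ holesOf holes I ∧ siblings par I I = ∅

/-- The module dependency graph: vertices are implementations plus one base node (`none`);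
there is an edge `i₁ → i₂` whenever `par i₂ ∈ holes i₁`, and an edge `base → i₂`
whenever `par i₂ ∈ baseHoles`. -/
def MDG {ι κ : Type*} (par : ι → κ) (holes : ι → Finset κ) (baseHoles : Finset κ) :
    Option ι → Option ι → Prop
  | some i₁, some i₂ => par i₂ ∈ holes i₁
  | none, some i₂ => par i₂ ∈ baseHoles
  | _, none => False

/-- Structural validity of a modular program signature: the module dependency graph has
no directed cycle, and every hole has at least one implementation. -/
def StructValid {ι κ : Type*} [Fintype ι] [DecidableEq κ]
    (par : ι → κ) (holes : ι → Finset κ) (baseHoles : Finset κ) : Prop :=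
  Irreflexive (Relation.TransGen (MDG par holes baseHoles)) ∧
  ∀ h : κ, (implsH par h).Nonempty

/-- The hole dependency graph `G_Dep`: an edge `h₁ → h₂` iff some implementation of `h₁`
references `h₂`. -/
def GDep {ι κ : Type*} (par : ι → κ) (holes : ι → Finset κ) (h₁ h₂ : κ) : Prop :=
  ∃ i : ι, par i = h₁ ∧ h₂ ∈ holes i

/-- `Hs 1, …, Hs n` is an enumeration of all holes in a topological order of the hole
dependency graph. -/
def TopoEnum {ι κ : Type*} (par : ι → κ) (holes : ι → Finset κ) (n : ℕ) (Hs : ℕ → κ) : Prop :=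
  (∀ h : κ, ∃ j, 1 ≤ j ∧ j ≤ n ∧ Hs j = h) ∧
  (∀ j k, 1 ≤ j → j ≤ n → 1 ≤ k → k ≤ n → Hs j = Hs k → j = k) ∧
  (∀ j k, 1 ≤ j → j ≤ n → 1 ≤ k → k ≤ n → GDep par holes (Hs j) (Hs k) → j < k)

/-- `Hpre Hs j` is the finset `{H₁, …, H_j}` of the first `j` holes of the enumeration. -/
def Hpre {κ : Type*} [DecidableEq κ] (Hs : ℕ → κ) (j : ℕ) : Finset κ :=
  (Finset.Icc 1 j).image Hs

/-- The implementations of the restricted signature `Limit(I)`: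
implementations `i` with `par i ∉ pars I` or `i ∈ I`. -/
def LimitImpls {ι κ : Type*} [Fintype ι] [DecidableEq ι] [DecidableEq κ]
    (par : ι → κ) (I : Finset ι) : Finset ι :=
  Finset.univ.filter (fun i => par i ∉ pars par I ∨ i ∈ I)

/-- The module dependency graph of the signature restricted to the allowed
implementations `A`. -/
def MDGRestr {ι κ : Type*} [DecidableEq ι]
    (par : ι → κ) (holes : ι → Finset κ) (baseHoles : Finset κ) (A : Finset ι) :
    Option ι → Option ι → Prop
  | some i₁, some i₂ => i₁ ∈ A ∧ i₂ ∈ A ∧ par i₂ ∈ holes i₁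
  | none, some i₂ => i₂ ∈ A ∧ par i₂ ∈ baseHoles
  | _, none => False

lemma mem_siblings' {ι κ : Type*} [DecidableEq ι] [DecidableEq κ] (par : ι → κ)
    (I₁ I₂ : Finset ι) (p : ι × ι) :
    p ∈ siblings par I₁ I₂ ↔ p.1 ∈ I₁ ∧ p.2 ∈ I₂ ∧ p.1 ≠ p.2 ∧ par p.1 = par p.2 := by
  simp [siblings, Finset.mem_filter, Finset.mem_product, and_assoc]

lemma mem_pars' {ι κ : Type*} [DecidableEq κ] (par : ι → κ) (I : Finset ι) (h : κ) :
    h ∈ pars par I ↔ ∃ i ∈ I, par i = h := by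
  simp [pars, Finset.mem_image]

lemma mem_limitImpls' {ι κ : Type*} [Fintype ι] [DecidableEq ι] [DecidableEq κ]
    (par : ι → κ) (J : Finset ι) (x : ι) :
    x ∈ LimitImpls par J ↔ par x ∉ pars par J ∨ x ∈ J := by
  simp [LimitImpls, Finset.mem_filter]

lemma pars_swap' {ι κ : Type*} [DecidableEq ι] [DecidableEq κ] (par : ι → κ)
    (I : Finset ι) {i i' : ι} (hi : i ∈ I) (hpar : par i' = par i) :
    pars par (insert i' (I.erase i)) = pars par I := by
  ext h
  simp only [mem_pars', Finset.mem_insert, Finset.mem_erase]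
  constructor
  · rintro ⟨j, hj | ⟨-, hj⟩, rfl⟩
    · exact ⟨i, hi, by rw [hj, hpar]⟩
    · exact ⟨j, hj, rfl⟩
  · rintro ⟨j, hj, rfl⟩
    by_cases hji : j = i
    · exact ⟨i', Or.inl rfl, by rw [hpar, hji]⟩
    · exact ⟨j, Or.inr ⟨hji, hj⟩, rfl⟩

lemma no_descent' {ι : Type*} [Finite ι] {r : ι → ι → Prop}
    (hirr : Irreflexive (Relation.TransGen r)) {Q : ι → Prop}
    (hstep : ∀ c, Q c → ∃ a, Q a ∧ r a c) : ∀ c, Q c → False := by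
  haveI : IsTrans ι (Relation.TransGen r) := ⟨fun _ _ _ => Relation.TransGen.trans⟩
  haveI : IsIrrefl ι (Relation.TransGen r) := ⟨hirr⟩
  have hwf : WellFounded (Relation.TransGen r) :=
    Finite.wellFounded_of_trans_of_irrefl _
  intro c
  induction c using hwf.induction with
  | _ c ih =>
    intro hQ
    obtain ⟨a, hQa, hr⟩ := hstep c hQ
    exact ih a (Relation.TransGen.single hr) hQa

/-- The neighbor set `Nei(I)` — the valid selections sharing exactly one sibling pair with
`I` — is the union, over `i ∈ I` and `i' ∈ impls(par(i)) \ {i}`, of the valid selections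
of the restricted signature `Limit((I \ {i}) ∪ {i'})`. -/
theorem neighbors_eq_union_limit {ι κ : Type*}
    [Fintype ι] [DecidableEq ι] [Fintype κ] [DecidableEq κ]
    (par : ι → κ) (holes : ι → Finset κ) (baseHoles : Finset κ)
    (hvalid : StructValid par holes baseHoles)
    (I : Finset ι) (hI : ValidSelection par holes baseHoles I) :
    {I' : Finset ι | ValidSelection par holes baseHoles I' ∧
        (siblings par I I').card = 1} =
      ⋃ i ∈ (I : Set ι), ⋃ i' ∈ {i' : ι | par i' = par i ∧ i' ≠ i},
        {I' : Finset ι | I' ⊆ LimitImpls par (insert i' (I.erase i)) ∧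
          ValidSelection par holes baseHoles I'} := by
  obtain ⟨hirr, _himpl⟩ := hvalid
  obtain ⟨hIpars, hIsib⟩ := hI
  have hsibI : ∀ a b : ι, a ∈ I → b ∈ I → par a = par b → a = b := by
    intro a b ha hb hab
    by_contra hne
    have : (a, b) ∈ siblings par I I := (mem_siblings' par I I (a, b)).mpr ⟨ha, hb, hne, hab⟩
    simp [hIsib] at this
  ext I'
  simp only [Set.mem_setOf_eq, Set.mem_iUnion, Finset.mem_coe]
  constructor
  · rintro ⟨hI', hcard⟩
    obtain ⟨p, hp⟩ := Finset.card_eq_one.mp hcard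
    have hpmem : p ∈ siblings par I I' := by rw [hp]; exact Finset.mem_singleton_self p
    obtain ⟨hp1, hp2, hpne, hppar⟩ := (mem_siblings' par I I' p).mp hpmem
    refine ⟨p.1, hp1, p.2, ⟨hppar.symm, fun h => hpne h.symm⟩, ?_, hI'⟩
    intro x hx
    rw [mem_limitImpls']
    by_cases hpx : par x ∈ pars par (insert p.2 (I.erase p.1))
    · right
      rw [pars_swap' par I hp1 hppar.symm, mem_pars'] at hpx
      obtain ⟨j, hj, hjx⟩ := hpx
      by_cases hxj : x = j
      · subst hxj
        by_cases hx1 : x = p.1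
        · exfalso
          have : (x, p.2) ∈ siblings par I' I' :=
            (mem_siblings' par I' I' (x, p.2)).mpr ⟨hx, hp2, hx1 ▸ hpne, hx1 ▸ hppar⟩
          simp [hI'.2] at this
        · exact Finset.mem_insert_of_mem (Finset.mem_erase.mpr ⟨hx1, hj⟩)
      · have : (j, x) ∈ siblings par I I' :=
          (mem_siblings' par I I' (j, x)).mpr ⟨hj, hx, fun h => hxj h.symm, hjx⟩
        rw [hp, Finset.mem_singleton] at this
        have hx2 : x = p.2 := by rw [← this]
        exact hx2 ▸ Finset.mem_insert_self _ _
    · exact Or.inl hpx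
  · rintro ⟨i, hi, i', ⟨hpar, hne⟩, hsub, hI'⟩
    refine ⟨hI', ?_⟩
    set J := insert i' (I.erase i) with hJ
    have hparsJ : pars par J = pars par I := pars_swap' par I hi hpar
    -- any sibling pair is (i, i')
    have hsub_sing : siblings par I I' ⊆ {(i, i')} := by
      intro p hp
      obtain ⟨hp1, hp2, hpne, hppar⟩ := (mem_siblings' par I I' p).mp hp
      have hp2J : p.2 ∈ J := by
        have := hsub hp2
        rw [mem_limitImpls', hparsJ] at this
        rcases this with h | h
        · exact absurd ((mem_pars' par I (par p.2)).mpr ⟨p.1, hp1, hppar⟩) h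
        · exact h
      rw [hJ, Finset.mem_insert] at hp2J
      rcases hp2J with h2 | h2
      · have h1 : p.1 = i := hsibI p.1 i hp1 hi (by rw [hppar, h2, hpar])
        rw [Finset.mem_singleton, Prod.ext_iff]
        exact ⟨h1, h2⟩
      · exfalso
        obtain ⟨hp2i, hp2I⟩ := Finset.mem_erase.mp h2
        exact hpne (hsibI p.1 p.2 hp1 hp2I hppar)
    -- par i ∈ pars I'
    have hparI' : par i ∈ pars par I' := by
      by_contra hpari
      have hstep : ∀ c, (c ∈ I ∧ par c ∉ pars par I') →
          ∃ a, (a ∈ I ∧ par a ∉ pars par I') ∧ par c ∈ holes a := by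
        rintro c ⟨hc, hcpar⟩
        have hcI : par c ∈ baseHoles ∪ holesOf holes I := by
          rw [← hIpars, mem_pars']; exact ⟨c, hc, rfl⟩
        rw [Finset.mem_union] at hcI
        rcases hcI with hb | hh
        · exact absurd (hI'.1 ▸ Finset.mem_union_left _ hb) hcpar
        · rw [holesOf, Finset.mem_biUnion] at hh
          obtain ⟨a, haI, hca⟩ := hh
          refine ⟨a, ⟨haI, ?_⟩, hca⟩
          intro hapar
          obtain ⟨b, hb, hba⟩ := (mem_pars' par I' (par a)).mp hapar
          have hbJ : b ∈ J := by
            have := hsub hb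
            rw [mem_limitImpls', hparsJ] at this
            rcases this with h | h
            · exact absurd ((mem_pars' par I (par b)).mpr ⟨a, haI, hba.symm⟩) h
            · exact h
          rw [hJ, Finset.mem_insert] at hbJ
          rcases hbJ with h2 | h2
          · -- b = i', so a = i, so par i ∈ pars I', contra
            have hai : a = i := hsibI a i haI hi (by rw [← hba, h2, hpar])
            exact hpari (hai ▸ hapar)
          · obtain ⟨_, hbI⟩ := Finset.mem_erase.mp h2
            have hba' : b = a := hsibI b a hbI haI hba
            apply hcpar
            rw [hI'.1, Finset.mem_union]
            right
            rw [holesOf, Finset.mem_biUnion]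
            exact ⟨b, hb, hba' ▸ hca⟩
      exact no_descent' (r := fun a c => MDG par holes baseHoles (some a) (some c))
        (fun x hx => hirr (some x)
          (Relation.TransGen.lift some (fun _ _ h => h) _ _ hx))
        hstep i ⟨hi, hpari⟩
    -- i' ∈ I'
    obtain ⟨b, hb, hbi⟩ := (mem_pars' par I' (par i)).mp hparI'
    have hbJ : b ∈ J := by
      have := hsub hb
      rw [mem_limitImpls', hparsJ] at this
      rcases this with h | h
      · exact absurd ((mem_pars' par I (par b)).mpr ⟨i, hi, hbi.symm⟩) h
      · exact h
    have hbi' : b = i' := by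
      rw [hJ, Finset.mem_insert] at hbJ
      rcases hbJ with h2 | h2
      · exact h2
      · obtain ⟨hbne, hbI⟩ := Finset.mem_erase.mp h2
        exact absurd (hsibI b i hbI hi hbi) hbne
    have hmem : (i, i') ∈ siblings par I I' :=
      (mem_siblings' par I I' (i, i')).mpr ⟨hi, hbi' ▸ hb, fun h => hne h.symm, hpar.symm⟩
    have : siblings par I I' = {(i, i')} :=
      Finset.Subset.antisymm hsub_sing (Finset.singleton_subset_iff.mpr hmem)
    rw [this, Finset.card_singleton]
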